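/- Let α : ℝ → ℝ be continuous and let A(t) = ∫₀ᵗ α(s) ds be nonvanishing on an open interval I. Let c₅ ≠ 0 and define u(x,t) = -(3/c₅)·x·A(t)⁻³ on ℝ × I. Then with β(t) = -c₅·A(t)²·α(t) and δ(t) = c₆·α(t), u satisfies u_t + α(t)·u·u_{xxx} + δ(t)·u_x·u_{xx} + β(t)·u·u_x = 0 on ℝ × I, for every constant c₆. -/

import Mathlib

theorem stmt_4 (α : ℝ → ℝ) (hα : Continuous α)
    (A : ℝ → ℝ) (hA : A = fun t => ∫ s in (0:ℝ)..t, α s)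
    (a b : ℝ) (hA0 : ∀ t ∈ Set.Ioo a b, A t ≠ 0)
    (c₅ : ℝ) (hc₅ : c₅ ≠ 0) (c₆ : ℝ)
    (u : ℝ → ℝ → ℝ) (hu : u = fun x t => -(3 / c₅) * x * ((A t) ^ 3)⁻¹)
    (β δ : ℝ → ℝ)
    (hβ : β = fun t => -c₅ * (A t) ^ 2 * α t)
    (hδ : δ = fun t => c₆ * α t) :
    ∀ x : ℝ, ∀ t ∈ Set.Ioo a b,
      deriv (fun τ => u x τ) t
        + α t * u x t * iteratedDeriv 3 (fun y => u y t) x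
        + δ t * deriv (fun y => u y t) x * iteratedDeriv 2 (fun y => u y t) x
        + β t * u x t * deriv (fun y => u y t) x = 0 := by
  intro x t ht
  have hAne : A t ≠ 0 := hA0 t ht
  have h3ne : (A t) ^ 3 ≠ 0 := pow_ne_zero 3 hAne
  -- derivative of A
  have hA' : HasDerivAt A (α t) t := by
    rw [hA]
    exact intervalIntegral.integral_hasDerivAt_right (hα.intervalIntegrable 0 t)
      (hα.stronglyMeasurableAtFilter _ _) hα.continuousAt
  -- time derivative of u x
  have hut : HasDerivAt (fun τ => u x τ)
      (-(3 / c₅) * x * (-(↑3 * (A t) ^ 2 * α t) / ((A t) ^ 3) ^ 2)) t := by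
    rw [hu]
    exact (((hA'.pow 3).inv h3ne).const_mul (-(3 / c₅) * x)).congr_deriv (by simp only [Pi.pow_apply]; ring)
  -- spatial derivatives
  have hsp : (fun y => u y t) = fun y => -(3 / c₅) * y * ((A t) ^ 3)⁻¹ := by
    rw [hu]
  have hdx : deriv (fun y => u y t) = fun _ => -(3 / c₅) * ((A t) ^ 3)⁻¹ := by
    funext y
    rw [hsp]
    have : HasDerivAt (fun y : ℝ => -(3 / c₅) * y * ((A t) ^ 3)⁻¹)
        (-(3 / c₅) * ((A t) ^ 3)⁻¹) y :=
      (((hasDerivAt_id y).const_mul (-(3 / c₅))).mul_const _).congr_deriv (by ring)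
    exact this.deriv
  have h2 : iteratedDeriv 2 (fun y => u y t) x = 0 := by
    rw [show (2 : ℕ) = 1 + 1 from rfl, iteratedDeriv_succ, iteratedDeriv_one, hdx,
      deriv_const]
  have h3 : iteratedDeriv 3 (fun y => u y t) x = 0 := by
    rw [show (3 : ℕ) = 2 + 1 from rfl, iteratedDeriv_succ]
    have : iteratedDeriv 2 (fun y => u y t) = fun _ => 0 := by
      funext y
      rw [show (2 : ℕ) = 1 + 1 from rfl, iteratedDeriv_succ, iteratedDeriv_one, hdx,
        deriv_const]
    rw [this, deriv_const]
  rw [hut.deriv, h2, h3, hdx, hu, hβ, hδ]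
  simp only
  field_simp
  ring
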